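/- Let g : (0,∞) → ℝ be continuously differentiable, fix r₀ > 0 and constants C₁, C₂ ∈ ℝ, and define m(r) = r²g(r), ρ(r) = (2rg(r) + r²g′(r))/(4πr²), and P(r) = −(1/(2π))·∫_{r₀}^r g(s)²/s ds − g(r)²/(8π) + C₂. Then for all r > 0: m′(r) = 4πr²ρ(r) and P′(r) = −g(r)·ρ(r); that is, the triple (m, ρ, P) generated from the gravity profile g solves the Newtonian equation of hydrostatic equilibrium dP/dr = −(m(r)/r²)ρ(r). -/

import Mathlib

open Real Set

theorem newtonian_algorithm_solves_hydrostatic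
    (g g' : ℝ → ℝ)
    (hg : ∀ r : ℝ, 0 < r → HasDerivAt g (g' r) r)
    (hg' : ContinuousOn g' (Ioi 0))
    (r₀ : ℝ) (hr₀ : 0 < r₀) (C₁ C₂ : ℝ)
    (m ρ P : ℝ → ℝ)
    (hm : ∀ r, m r = r ^ 2 * g r)
    (hρ : ∀ r, ρ r = (2 * r * g r + r ^ 2 * g' r) / (4 * π * r ^ 2))
    (hP : ∀ r, P r = -(1 / (2 * π)) * (∫ s in r₀..r, g s ^ 2 / s) - g r ^ 2 / (8 * π) + C₂) :
    ∀ r : ℝ, 0 < r →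
      HasDerivAt m (4 * π * r ^ 2 * ρ r) r ∧
      HasDerivAt P (-(g r * ρ r)) r := by
  have hπ : (π : ℝ) ≠ 0 := Real.pi_ne_zero
  have hgc : ContinuousOn g (Ioi 0) := fun x hx =>
    ((hg x hx).continuousAt).continuousWithinAt
  have hfc : ContinuousOn (fun s => g s ^ 2 / s) (Ioi 0) :=
    (hgc.pow 2).div continuousOn_id (fun x hx => ne_of_gt hx)
  intro r hr
  have hrne : r ≠ 0 := ne_of_gt hr
  constructor
  · have hmfun : m = fun x => x ^ 2 * g x := funext hm
    rw [hmfun]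
    have h1 : HasDerivAt (fun x => x ^ 2 * g x)
        ((↑2 * r ^ (2 - 1)) * g r + r ^ 2 * g' r) r :=
      (hasDerivAt_pow 2 r).mul (hg r hr)
    convert h1 using 1
    rw [hρ]
    field_simp
    rw [show (2:ℕ) - 1 = 1 from rfl]
    ring
  · have hPfun : P = fun x =>
        -(1 / (2 * π)) * (∫ s in r₀..x, g s ^ 2 / s) - g x ^ 2 / (8 * π) + C₂ :=
      funext hP
    rw [hPfun]
    have hsub : uIcc r₀ r ⊆ Ioi 0 := fun x hx =>
      lt_of_lt_of_le (lt_min hr₀ hr) hx.1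
    have hint : IntervalIntegrable (fun s => g s ^ 2 / s) MeasureTheory.volume r₀ r :=
      (hfc.mono hsub).intervalIntegrable
    have hmeas : StronglyMeasurableAtFilter (fun s => g s ^ 2 / s) (nhds r)
        MeasureTheory.volume :=
      hfc.stronglyMeasurableAtFilter isOpen_Ioi r hr
    have hF : HasDerivAt (fun x => ∫ s in r₀..x, g s ^ 2 / s) (g r ^ 2 / r) r :=
      intervalIntegral.integral_hasDerivAt_right hint hmeas
        (hfc.continuousAt (isOpen_Ioi.mem_nhds hr))
    have hg2 : HasDerivAt (fun x => g x ^ 2) (2 * g r ^ 1 * g' r) r := (hg r hr).pow 2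
    have hPd : HasDerivAt
        (fun x => -(1 / (2 * π)) * (∫ s in r₀..x, g s ^ 2 / s) - g x ^ 2 / (8 * π) + C₂)
        (-(1 / (2 * π)) * (g r ^ 2 / r) - 2 * g r ^ 1 * g' r / (8 * π)) r :=
      ((hF.const_mul _).sub (hg2.div_const _)).add_const C₂
    convert hPd using 1
    rw [hρ]
    field_simp
    ring
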